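/- The type B_n Tamari lattice possesses an unrefinable (maximal) chain of left modular elements, namely 0̂ ⋖ S_{n,1} ⋖ S_{n,2} ⋖ ... ⋖ S_{n,∞} ⋖ S_{n-1,1} ⋖ ... ⋖ S_{1,∞} = 1̂, where S_{i,t} has bracket vector with 0's before position i, t at position i, and ∞'s after position i. -/

import Mathlib

/-- Condition (i) for type `B_n` bracket vectors: for `i < j` (0-based),
if `r_j - (j-i)` is a nonnegative integer then `r_i ≤ r_j - (j-i)`
(equivalently `r_i + (j-i) ≤ r_j`; when `r_j = ∞` this holds trivially,
matching the convention that `∞` minus an integer is `∞`). -/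
def condIB (n : ℕ) (r : Fin n → ℕ∞) : Prop :=
  ∀ i j : Fin n, i < j → (((j : ℕ) - (i : ℕ) : ℕ) : ℕ∞) ≤ r j →
    r i + (((j : ℕ) - (i : ℕ) : ℕ) : ℕ∞) ≤ r j

/-- Condition (ii) for type `B_n` bracket vectors: if `∞ > r_i ≥ i`
(1-based; here `i = k+1` for the 0-based index `k`) then `r_{n+i-r_i} = ∞`. -/
def condIIB (n : ℕ) (r : Fin n → ℕ∞) : Prop :=
  ∀ (k : Fin n) (t : ℕ), r k = (t : ℕ∞) → ∀ _ht : (k : ℕ) + 1 ≤ t,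
    r ⟨n + (k : ℕ) - t, by have := k.isLt; omega⟩ = ⊤

/-- Entries lie in `{0, …, n-1} ∪ {∞}`. -/
def entriesB (n : ℕ) (r : Fin n → ℕ∞) : Prop :=
  ∀ k, r k = ⊤ ∨ r k ≤ ((n - 1 : ℕ) : ℕ∞)

/-- A type `B_n` bracket vector. -/
def isBVec (n : ℕ) (r : Fin n → ℕ∞) : Prop :=
  entriesB n r ∧ condIB n r ∧ condIIB n r

/-- `u` is the join (least upper bound) of `a` and `b` in the type `B_n`
Tamari lattice of bracket vectors (componentwise order). -/
def isJoinB (n : ℕ) (a b u : Fin n → ℕ∞) : Prop :=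
  isBVec n u ∧ a ≤ u ∧ b ≤ u ∧
    ∀ h : Fin n → ℕ∞, isBVec n h → a ≤ h → b ≤ h → u ≤ h

/-- `m` is the meet (greatest lower bound) of `a` and `b` in the type `B_n`
Tamari lattice of bracket vectors (componentwise order). -/
def isMeetB (n : ℕ) (a b m : Fin n → ℕ∞) : Prop :=
  isBVec n m ∧ m ≤ a ∧ m ≤ b ∧
    ∀ h : Fin n → ℕ∞, isBVec n h → h ≤ a → h ≤ b → h ≤ m

/-- The element `S_{i,t}` (0-based index `k`, so `i = k + 1`): bracket vector
with `0` in positions before `k`, `t` in position `k`, and `∞` after. -/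
def Sel (n : ℕ) (k : Fin n) (t : ℕ∞) : Fin n → ℕ∞ := fun j =>
  if j < k then 0 else if j = k then t else ⊤

/-- `x` is left modular in the type `B_n` Tamari lattice:
`(Y ∨ x) ∧ Z = Y ∨ (x ∧ Z)` for all `Y < Z`. -/
def leftModB (n : ℕ) (x : Fin n → ℕ∞) : Prop :=
  ∀ Y Z : Fin n → ℕ∞, isBVec n Y → isBVec n Z → Y < Z →
    ∀ J M A B : Fin n → ℕ∞,
      isJoinB n Y x J → isMeetB n x Z M →
      isMeetB n J Z A → isJoinB n Y M B → A = B

/-- The chain `0̂ ⋖ S_{n,1} ⋖ S_{n,2} ⋖ ⋯ ⋖ S_{n,∞} ⋖ S_{n-1,1} ⋖ ⋯ ⋖ S_{1,∞} = 1̂`,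
enumerated by `m ∈ {0, 1, …, n²}`. -/
noncomputable def chainB (n : ℕ) (hn : 0 < n) (m : ℕ) : Fin n → ℕ∞ :=
  if m = 0 then fun _ => 0
  else
    Sel n ⟨n - 1 - (m - 1) / n, by have h := Nat.sub_le (n - 1) ((m - 1) / n); omega⟩
      (if (m - 1) % n = n - 1 then ⊤ else (((m - 1) % n + 1 : ℕ) : ℕ∞))

lemma sel_lt {n : ℕ} (k : Fin n) (t : ℕ∞) {j : Fin n} (h : j < k) : Sel n k t j = 0 :=
  if_pos h

lemma sel_self {n : ℕ} (k : Fin n) (t : ℕ∞) : Sel n k t k = t := by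
  simp [Sel]

lemma sel_gt {n : ℕ} (k : Fin n) (t : ℕ∞) {j : Fin n} (h : k < j) : Sel n k t j = ⊤ := by
  unfold Sel
  rw [if_neg (by exact not_lt_of_gt h), if_neg (by exact ne_of_gt h)]

lemma entry_nat_le {n : ℕ} {r : Fin n → ℕ∞} (h : entriesB n r) (j : Fin n) (s : ℕ)
    (hj : r j = (s : ℕ∞)) : s ≤ n - 1 := by
  rcases h j with h' | h'
  · rw [h'] at hj; simp at hj
  · rw [hj] at h'; exact_mod_cast h'

lemma sel_isBVec (n : ℕ) (k : Fin n) (t : ℕ∞)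
    (ht : t ≤ ((n - 1 : ℕ) : ℕ∞) ∨ t = ⊤) : isBVec n (Sel n k t) := by
  refine ⟨?_, ?_, ?_⟩
  · intro j
    rcases lt_trichotomy j k with h | h | h
    · right; rw [sel_lt k t h]; exact zero_le
    · subst h; rw [sel_self]; exact ht.symm.imp id id
    · left; exact sel_gt k t h
  · intro i j hij hle
    rcases lt_trichotomy i k with h | h | h
    · rw [sel_lt k t h, zero_add]; exact hle
    · have hkj : k < j := by rw [← h]; exact hij
      rw [sel_gt k t hkj]
      exact le_top
    · rw [sel_gt k t (lt_trans h hij), sel_gt k t h]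
      exact le_top
  · intro j s hjs hs
    rcases lt_trichotomy j k with h | h | h
    · rw [sel_lt k t h] at hjs
      have : s = 0 := by exact_mod_cast hjs.symm
      omega
    · subst h
      rw [sel_self] at hjs
      have hsn : s ≤ n - 1 := by
        rcases ht with ht | ht
        · rw [hjs] at ht; exact_mod_cast ht
        · rw [ht] at hjs; simp at hjs
      apply sel_gt
      rw [Fin.lt_def]
      simp only
      have hj := j.isLt
      omega
    · rw [sel_gt k t h] at hjs; simp at hjs

lemma nlt_of_eq {α : Type*} [Preorder α] {a b : α} (h : a = b) : ¬ a < b := by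
  subst h; exact lt_irrefl a

lemma sel_leftMod (n : ℕ) (k : Fin n) (t : ℕ∞)
    (ht : t ≤ ((n - 1 : ℕ) : ℕ∞) ∨ t = ⊤) : leftModB n (Sel n k t) := by
  intro Y Z hY hZ hYZlt J M A B hJ hM hA hB
  obtain ⟨hJbv, hYJ, hxJ, hJmin⟩ := hJ
  obtain ⟨hMbv, hMx, hMZ, hMmax⟩ := hM
  obtain ⟨hAbv, hAJ, hAZ, hAmax⟩ := hA
  obtain ⟨hBbv, hYB, hMB, hBmin⟩ := hB
  have hYZ : Y ≤ Z := le_of_lt hYZlt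
  have hYA : Y ≤ A := hAmax Y hY hYJ hYZ
  have hMA : M ≤ A := hAmax M hMbv (le_trans hMx hxJ) hMZ
  have hBA : B ≤ A := hBmin A hAbv hYA hMA
  -- the vector U = (Y_{<k}, ⊤, …, ⊤) is a bracket vector above Y and x
  have hUbv : isBVec n (fun j => if j < k then Y j else ⊤) := by
    refine ⟨?_, ?_, ?_⟩
    · intro j
      by_cases h : j < k
      · simpa [h] using hY.1 j
      · left; simp [h]
    · intro i j hij hle
      by_cases h : j < k
      · have hi : i < k := lt_trans hij h
        simp only [if_pos h, if_pos hi] at hle ⊢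
        exact hY.2.1 i j hij hle
      · simp only [if_neg h]
        exact le_top
    · intro j s hjs hs
      by_cases h : j < k
      · simp only [if_pos h] at hjs
        have hp := hY.2.2 j s hjs hs
        by_cases h2 : (⟨n + (j : ℕ) - s, by have := j.isLt; omega⟩ : Fin n) < k
        · simpa [h2] using hp
        · simp [h2]
      · simp only [if_neg h] at hjs
        simp at hjs
  have hJU : J ≤ (fun j => if j < k then Y j else ⊤) := by
    refine hJmin _ hUbv ?_ ?_
    · intro j
      by_cases h : j < k
      · simp [h]
      · simp [h]
    · intro j
      by_cases h : j < k
      · simp [h, sel_lt k t h]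
      · simp [h]
  have hJlt : ∀ j : Fin n, j < k → J j = Y j := by
    intro j h
    refine le_antisymm ?_ (hYJ j)
    simpa [h] using hJU j
  have hJgt : ∀ j : Fin n, k < j → J j = ⊤ := by
    intro j h
    refine top_le_iff.mp ?_
    rw [← sel_gt k t h]
    exact hxJ j
  have hJk : t ≤ J k := by
    rw [← sel_self k t]; exact hxJ k
  -- the vector V = (0, …, 0, Z_{>k}) is a bracket vector below x and Z
  have hVbv : isBVec n (fun j => if j ≤ k then 0 else Z j) := by
    refine ⟨?_, ?_, ?_⟩
    · intro j
      by_cases h : j ≤ k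
      · right; simp [h]
      · simpa [h] using hZ.1 j
    · intro i j hij hle
      by_cases h : i ≤ k
      · simp only [if_pos h, zero_add]
        exact hle
      · have hj : ¬ j ≤ k := fun hc => h (le_of_lt (lt_of_lt_of_le hij hc))
        simp only [if_neg h, if_neg hj] at hle ⊢
        exact hZ.2.1 i j hij hle
    · intro j s hjs hs
      by_cases h : j ≤ k
      · simp only [if_pos h] at hjs
        have : s = 0 := by exact_mod_cast hjs.symm
        omega
      · simp only [if_neg h] at hjs
        have hsn : s ≤ n - 1 := entry_nat_le hZ.1 j s hjs
        have hp := hZ.2.2 j s hjs hs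
        have hgt : ¬ ((⟨n + (j : ℕ) - s, by have := j.isLt; omega⟩ : Fin n) ≤ k) := by
          push_neg at h
          rw [Fin.lt_def] at h
          rw [not_le, Fin.lt_def]
          simp only
          have := j.isLt
          omega
        simp only [if_neg hgt]
        exact hp
  have hVM : (fun j => if j ≤ k then 0 else Z j) ≤ M := by
    refine hMmax _ hVbv ?_ ?_
    · intro j
      rcases lt_trichotomy j k with h | h | h
      · simp [le_of_lt h, sel_lt k t h]
      · simp [le_of_eq h]
      · simp [not_le_of_gt h, sel_gt k t h]
    · intro j
      by_cases h : j ≤ k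
      · simp [h]
      · simp [h]
  have hMlt : ∀ j : Fin n, j < k → M j = 0 := by
    intro j h
    refine le_antisymm ?_ zero_le
    rw [← sel_lt k t h]
    exact hMx j
  have hMgt : ∀ j : Fin n, k < j → M j = Z j := by
    intro j h
    refine le_antisymm (hMZ j) ?_
    simpa [not_le_of_gt h] using hVM j
  have hMk : M k ≤ t := by
    rw [← sel_self k t]; exact hMx k
  -- shapes of A and B
  have hAlt : ∀ j : Fin n, j < k → A j = Y j := by
    intro j h
    exact le_antisymm (le_trans (hAJ j) (le_of_eq (hJlt j h))) (hYA j)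
  have hAgt : ∀ j : Fin n, k < j → A j = Z j := by
    intro j h
    exact le_antisymm (hAZ j) (le_trans (le_of_eq (hMgt j h).symm) (hMA j))
  have hBlt : ∀ j : Fin n, j < k → B j = Y j := by
    intro j h
    exact le_antisymm (le_trans (hBA j) (le_of_eq (hAlt j h))) (hYB j)
  have hBgt : ∀ j : Fin n, k < j → B j = Z j := by
    intro j h
    exact le_antisymm (le_trans (hBA j) (le_of_eq (hAgt j h))) (le_trans (le_of_eq (hMgt j h).symm) (hMB j))
  -- the crucial inequality A k ≤ B k
  have key : A k ≤ B k := by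
    by_cases hc : t ≤ B k
    · -- h' = (B_{≤k}, ⊤, …, ⊤) is a bracket vector above Y and x, so J ≤ h'
      have hbv : isBVec n (fun j => if j ≤ k then B j else ⊤) := by
        refine ⟨?_, ?_, ?_⟩
        · intro j
          by_cases h : j ≤ k
          · simpa [h] using hBbv.1 j
          · left; simp [h]
        · intro i j hij hle
          by_cases h : j ≤ k
          · have hi : i ≤ k := le_of_lt (lt_of_lt_of_le hij h)
            simp only [if_pos h, if_pos hi] at hle ⊢
            exact hBbv.2.1 i j hij hle
          · simp only [if_neg h]
            exact le_top
        · intro j s hjs hs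
          by_cases h : j ≤ k
          · simp only [if_pos h] at hjs
            have hp := hBbv.2.2 j s hjs hs
            by_cases h2 : (⟨n + (j : ℕ) - s, by have := j.isLt; omega⟩ : Fin n) ≤ k
            · simpa [h2] using hp
            · simp [h2]
          · simp only [if_neg h] at hjs
            simp at hjs
      have hJh : J ≤ (fun j => if j ≤ k then B j else ⊤) := by
        refine hJmin _ hbv ?_ ?_
        · intro j
          by_cases h : j ≤ k
          · simp only [if_pos h]; exact hYB j
          · simp [h]
        · intro j
          rcases lt_trichotomy j k with h | h | h
          · simp only [if_pos (le_of_lt h), sel_lt k t h]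
            exact zero_le
          · subst h
            simpa [sel_self] using hc
          · simp [not_le_of_gt h, sel_gt k t h]
      have := hJh k
      simp only [le_refl, if_pos] at this
      exact le_trans (hAJ k) this
    · push_neg at hc
      by_cases hat : A k ≤ t
      · -- W = (0, …, 0, A_{≥k}) is a bracket vector below x and Z, so W ≤ M
        have hWbv : isBVec n (fun j => if j < k then 0 else A j) := by
          refine ⟨?_, ?_, ?_⟩
          · intro j
            by_cases h : j < k
            · right; simp [h]
            · simpa [h] using hAbv.1 j
          · intro i j hij hle
            by_cases h : i < k
            · simp only [if_pos h, zero_add]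
              exact hle
            · have hj : ¬ j < k := fun hc2 => h (lt_trans hij hc2)
              simp only [if_neg h, if_neg hj] at hle ⊢
              exact hAbv.2.1 i j hij hle
          · intro j s hjs hs
            by_cases h : j < k
            · simp only [if_pos h] at hjs
              have : s = 0 := by exact_mod_cast hjs.symm
              omega
            · simp only [if_neg h] at hjs
              have hsn : s ≤ n - 1 := entry_nat_le hAbv.1 j s hjs
              have hp := hAbv.2.2 j s hjs hs
              have hgt : ¬ ((⟨n + (j : ℕ) - s, by have := j.isLt; omega⟩ : Fin n) < k) := by
                rw [not_lt] at h ⊢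
                rw [Fin.le_def] at h ⊢
                simp only at h ⊢
                have := j.isLt
                omega
              simp only [if_neg hgt]
              exact hp
        have hWM : (fun j => if j < k then 0 else A j) ≤ M := by
          refine hMmax _ hWbv ?_ ?_
          · intro j
            rcases lt_trichotomy j k with h | h | h
            · simp [h, sel_lt k t h]
            · subst h
              simpa [lt_irrefl, sel_self] using hat
            · simp [not_lt_of_gt h, sel_gt k t h]
          · intro j
            by_cases h : j < k
            · simp [h]
            · simp only [if_neg h]
              exact hAZ j
        have := hWM k
        simp only [lt_irrefl, if_neg (lt_irrefl k)] at this
        exact le_trans this (hMB k)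
      · exfalso
        -- t is finite
        obtain ⟨tn, rfl⟩ : ∃ tn : ℕ, t = (tn : ℕ∞) := by
          rcases ht with h | h
          · lift t to ℕ using (ne_top_of_le_ne_top (by simp) h)
            exact ⟨t, rfl⟩
          · exact absurd (by rw [h]; exact le_top : A k ≤ t) hat
        have htn : tn ≤ n - 1 := by
          rcases ht with h | h
          · exact_mod_cast h
          · simp at h
        have htA : ((tn : ℕ∞)) < A k := not_le.mp hat
        by_cases hL : ∀ i : Fin n, i < k → ((((k : ℕ) - (i : ℕ) : ℕ)) : ℕ∞) ≤ (tn : ℕ∞) →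
            Y i + ((((k : ℕ) - (i : ℕ) : ℕ)) : ℕ∞) ≤ (tn : ℕ∞)
        · -- h'' = (Y_{<k}, tn, ⊤, …, ⊤) is a bracket vector above Y and x
          have hYkfin : Y k < (tn : ℕ∞) := lt_of_le_of_lt (hYB k) hc
          have hbv : isBVec n (fun j => if j < k then Y j else if j = k then (tn : ℕ∞) else ⊤) := by
            refine ⟨?_, ?_, ?_⟩
            · intro j
              rcases lt_trichotomy j k with h | h | h
              · simpa [h] using hY.1 j
              · right
                simp only [if_neg (nlt_of_eq h), if_pos h]
                exact_mod_cast htn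
              · left; simp [not_lt_of_gt h, ne_of_gt h]
            · intro i j hij hle
              rcases lt_trichotomy j k with h | h | h
              · have hi : i < k := lt_trans hij h
                simp only [if_pos h, if_pos hi] at hle ⊢
                exact hY.2.1 i j hij hle
              · have hi : i < k := h ▸ hij
                simp only [if_neg (nlt_of_eq h), if_pos h, if_pos hi] at hle ⊢
                have := hL i hi
                rw [show ((k:ℕ) - (i:ℕ)) = ((j:ℕ) - (i:ℕ)) from by rw [h]] at this
                exact this hle
              · simp only [if_neg (not_lt_of_gt h), if_neg (ne_of_gt h)]
                exact le_top
            · intro j s hjs hs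
              rcases lt_trichotomy j k with h | h | h
              · simp only [if_pos h] at hjs
                have hp := hY.2.2 j s hjs hs
                set p : Fin n := ⟨n + (j : ℕ) - s, by have := j.isLt; omega⟩ with hpdef
                rcases lt_trichotomy p k with h2 | h2 | h2
                · simpa [h2] using hp
                · exfalso
                  rw [h2] at hp
                  rw [hp] at hYkfin
                  simp at hYkfin
                · simp [not_lt_of_gt h2, ne_of_gt h2]
              · have hjs' : ((tn : ℕ∞)) = (s : ℕ∞) := by
                  rw [← hjs]
                  simp [nlt_of_eq h, h]
                have hstn : s = tn := by exact_mod_cast hjs'.symm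
                have hvk : (j : ℕ) = (k : ℕ) := by rw [h]
                have hgt : k < (⟨n + (j : ℕ) - s, by have := j.isLt; omega⟩ : Fin n) := by
                  rw [Fin.lt_def]
                  simp only
                  omega
                simp only [if_neg (not_lt_of_gt hgt), if_neg (ne_of_gt hgt)]
              · simp only [if_neg (not_lt_of_gt h), if_neg (ne_of_gt h)] at hjs
                simp at hjs
          have hJh : J ≤ (fun j => if j < k then Y j else if j = k then (tn : ℕ∞) else ⊤) := by
            refine hJmin _ hbv ?_ ?_
            · intro j
              rcases lt_trichotomy j k with h | h | h
              · simp [h]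
              · simp only [if_neg (nlt_of_eq h), if_pos h]
                calc Y j ≤ B j := hYB j
                  _ = B k := by rw [h]
                  _ ≤ (tn : ℕ∞) := le_of_lt hc
              · simp [not_lt_of_gt h, ne_of_gt h]
            · intro j
              rcases lt_trichotomy j k with h | h | h
              · simp [h, sel_lt k ((tn : ℕ∞)) h]
              · rw [show Sel n k (tn : ℕ∞) j = (tn : ℕ∞) from by rw [h, sel_self]]
                simp only [if_neg (nlt_of_eq h), if_pos h, le_refl]
              · simp [not_lt_of_gt h, ne_of_gt h, sel_gt k ((tn : ℕ∞)) h]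
          have hcon : A k ≤ (tn : ℕ∞) := by
            refine le_trans (hAJ k) ?_
            have := hJh k
            simpa [lt_irrefl] using this
          exact absurd hcon hat
        · push_neg at hL
          obtain ⟨i, hik, hdt, hbad⟩ := hL
          -- B k < k - i
          have hBkd : B k < (((k : ℕ) - (i : ℕ) : ℕ) : ℕ∞) := by
            by_contra hcon
            push_neg at hcon
            have h1 := hBbv.2.1 i k hik hcon
            rw [hBlt i hik] at h1
            exact not_le_of_gt hbad (le_trans h1 (le_of_lt hc))
          -- but the vector P = (0,…,0, k-i, Z_{>k}) is a bracket vector below x and Z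
          have hdZ : (((k : ℕ) - (i : ℕ) : ℕ) : ℕ∞) ≤ Z k :=
            le_trans hdt (le_trans (le_of_lt htA) (hAZ k))
          have hPbv : isBVec n
              (fun j => if j < k then 0 else if j = k then (((k : ℕ) - (i : ℕ) : ℕ) : ℕ∞) else Z j) := by
            refine ⟨?_, ?_, ?_⟩
            · intro j
              rcases lt_trichotomy j k with h | h | h
              · right; simp [h]
              · right
                simp only [if_neg (nlt_of_eq h), if_pos h]
                have := k.isLt
                exact_mod_cast (by omega : (k : ℕ) - (i : ℕ) ≤ n - 1)
              · simp only [if_neg (not_lt_of_gt h), if_neg (ne_of_gt h)]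
                simpa using hZ.1 j
            · intro i' j hij hle
              rcases lt_trichotomy i' k with h | h | h
              · simp only [if_pos h, zero_add]
                exact hle
              · have hj : k < j := lt_of_le_of_lt (le_of_eq h.symm) hij
                simp only [if_neg (nlt_of_eq h), if_pos h,
                  if_neg (not_lt_of_gt hj), if_neg (ne_of_gt hj)] at hle ⊢
                have h2 := hZ.2.1 k j hj (by rw [show ((j:ℕ) - (k:ℕ)) = ((j:ℕ) - (i':ℕ)) from by rw [h]]; exact hle)
                calc (((k : ℕ) - (i : ℕ) : ℕ) : ℕ∞) + (((j : ℕ) - (i' : ℕ) : ℕ) : ℕ∞)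
                    ≤ Z k + (((j : ℕ) - (i' : ℕ) : ℕ) : ℕ∞) := add_le_add_left hdZ _
                  _ = Z k + (((j : ℕ) - (k : ℕ) : ℕ) : ℕ∞) := by rw [show ((j:ℕ) - (k:ℕ)) = ((j:ℕ) - (i':ℕ)) from by rw [h]]
                  _ ≤ Z j := h2
              · have hj : k < j := lt_trans h hij
                simp only [if_neg (not_lt_of_gt h), if_neg (ne_of_gt h),
                  if_neg (not_lt_of_gt hj), if_neg (ne_of_gt hj)] at hle ⊢
                exact hZ.2.1 i' j hij hle
            · intro j s hjs hs
              rcases lt_trichotomy j k with h | h | h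
              · simp only [if_pos h] at hjs
                have : s = 0 := by exact_mod_cast hjs.symm
                omega
              · exfalso
                have hjs' : ((((k : ℕ) - (i : ℕ) : ℕ) : ℕ∞)) = (s : ℕ∞) := by
                  rw [← hjs]
                  simp [nlt_of_eq h, h]
                have hsd : s = (k : ℕ) - (i : ℕ) := by exact_mod_cast hjs'.symm
                have hvk : (j : ℕ) = (k : ℕ) := by rw [h]
                omega
              · simp only [if_neg (not_lt_of_gt h), if_neg (ne_of_gt h)] at hjs
                have hsn : s ≤ n - 1 := entry_nat_le hZ.1 j s hjs
                have hp := hZ.2.2 j s hjs hs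
                have hgt : k < (⟨n + (j : ℕ) - s, by have := j.isLt; omega⟩ : Fin n) := by
                  rw [Fin.lt_def] at h ⊢
                  simp only at h ⊢
                  omega
                simp only [if_neg (not_lt_of_gt hgt), if_neg (ne_of_gt hgt)]
                exact hp
          have hPM : (fun j => if j < k then 0 else if j = k then (((k : ℕ) - (i : ℕ) : ℕ) : ℕ∞) else Z j) ≤ M := by
            refine hMmax _ hPbv ?_ ?_
            · intro j
              rcases lt_trichotomy j k with h | h | h
              · simp [h, sel_lt k ((tn:ℕ∞)) h]
              · rw [show Sel n k ((tn:ℕ∞)) j = (tn : ℕ∞) from by rw [h, sel_self]]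
                simp only [if_neg (nlt_of_eq h), if_pos h]
                exact hdt
              · simp [not_lt_of_gt h, ne_of_gt h, sel_gt k ((tn : ℕ∞)) h]
            · intro j
              rcases lt_trichotomy j k with h | h | h
              · simp [h]
              · have : Z j = Z k := by rw [h]
                rw [this]
                simp only [if_neg (nlt_of_eq h), if_pos h]
                exact hdZ
              · simp [not_lt_of_gt h, ne_of_gt h]
          have hfin : (((k : ℕ) - (i : ℕ) : ℕ) : ℕ∞) ≤ B k := by
            refine le_trans ?_ (hMB k)
            have := hPM k
            simpa [lt_irrefl] using this
          exact absurd hfin (not_le.mpr hBkd)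
  funext j
  rcases lt_trichotomy j k with h | h | h
  · rw [hAlt j h, hBlt j h]
  · subst h
    exact le_antisymm key (hBA j)
  · rw [hAgt j h, hBgt j h]

lemma sel_lt_sel (n : ℕ) (k : Fin n) {a b : ℕ∞} (h : a < b) : Sel n k a < Sel n k b := by
  refine lt_of_le_of_ne ?_ ?_
  · intro j
    rcases lt_trichotomy j k with hj | hj | hj
    · rw [sel_lt k a hj, sel_lt k b hj]
    · rw [hj, sel_self, sel_self]; exact le_of_lt h
    · rw [sel_gt k a hj, sel_gt k b hj]
  · intro he
    have := congrFun he k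
    rw [sel_self, sel_self] at this
    exact ne_of_lt h this

lemma sel_between (n : ℕ) (k : Fin n) {a b : ℕ∞} (c : Fin n → ℕ∞)
    (h1 : Sel n k a < c) (h2 : c < Sel n k b) : a < c k ∧ c k < b := by
  obtain ⟨h1le, h1ne⟩ := lt_iff_le_and_ne.mp h1
  obtain ⟨h2le, h2ne⟩ := lt_iff_le_and_ne.mp h2
  constructor
  · refine lt_of_le_of_ne (by simpa [sel_self] using h1le k) ?_
    intro he
    apply h1ne
    funext j
    rcases lt_trichotomy j k with hj | hj | hj
    · rw [sel_lt k a hj]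
      have := h2le j
      rw [sel_lt k b hj] at this
      exact (le_antisymm this zero_le).symm
    · rw [hj, sel_self]
      rw [← hj] at he ⊢
      exact he
    · rw [sel_gt k a hj]
      have := h1le j
      rw [sel_gt k a hj] at this
      exact (top_le_iff.mp this).symm
  · refine lt_of_le_of_ne (by simpa [sel_self] using h2le k) ?_
    intro he
    apply h2ne
    funext j
    rcases lt_trichotomy j k with hj | hj | hj
    · rw [sel_lt k b hj]
      have := h2le j
      rw [sel_lt k b hj] at this
      exact le_antisymm this zero_le
    · rw [hj, sel_self]
      rw [← hj] at he ⊢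
      exact he
    · rw [sel_gt k b hj]
      have := h1le j
      rw [sel_gt k a hj] at this
      exact top_le_iff.mp this

lemma gap_elim (n : ℕ) {c : Fin n → ℕ∞} (hc : isBVec n c) (k : Fin n) {a b : ℕ∞}
    (hgap : (∃ v : ℕ, a = (v : ℕ∞) ∧ b = ((v + 1 : ℕ) : ℕ∞)) ∨
      (a = ((n - 1 : ℕ) : ℕ∞) ∧ b = ⊤))
    (h1 : a < c k) (h2 : c k < b) : False := by
  rcases hgap with ⟨v, ha, hb⟩ | ⟨ha, hb⟩
  · subst ha; subst hb
    lift c k to ℕ using (ne_top_of_lt h2) with w hw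
    have l1 : v < w := by exact_mod_cast h1
    have l2 : w < v + 1 := by exact_mod_cast h2
    omega
  · subst ha; subst hb
    rcases hc.1 k with h | h
    · rw [h] at h2
      exact absurd h2 (lt_irrefl _)
    · exact absurd (lt_of_lt_of_le h1 h) (lt_irrefl _)

lemma sel_top_eq (n : ℕ) (k k' : Fin n) (h : (k' : ℕ) + 1 = (k : ℕ)) :
    Sel n k ⊤ = Sel n k' 0 := by
  funext j
  by_cases hj : (j : ℕ) < (k : ℕ)
  · rw [sel_lt k ⊤ (by rwa [Fin.lt_def])]
    rcases lt_or_eq_of_le (by omega : (j : ℕ) ≤ (k' : ℕ)) with hh | hh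
    · rw [sel_lt k' 0 (by rwa [Fin.lt_def])]
    · rw [show j = k' from Fin.ext hh, sel_self]
  · rw [sel_gt k' 0 (by rw [Fin.lt_def]; omega)]
    rcases lt_or_eq_of_le (by omega : (k : ℕ) ≤ (j : ℕ)) with hh | hh
    · rw [sel_gt k ⊤ (by rwa [Fin.lt_def])]
    · rw [show j = k from Fin.ext hh.symm, sel_self]

lemma chainB_zero_eq (n : ℕ) (hn : 0 < n) :
    chainB n hn 0 = Sel n ⟨n - 1, by omega⟩ 0 := by
  funext j
  rw [chainB, if_pos rfl]
  have hj := j.isLt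
  rcases lt_or_eq_of_le (by omega : (j : ℕ) ≤ n - 1) with hh | hh
  · rw [sel_lt _ 0 (by rwa [Fin.lt_def])]
  · rw [show j = (⟨n - 1, by omega⟩ : Fin n) from Fin.ext hh, sel_self]

lemma chainB_pos_eq (n : ℕ) (hn : 0 < n) (m : ℕ) (hm : m ≠ 0) :
    chainB n hn m = Sel n ⟨n - 1 - (m - 1) / n, by have := Nat.sub_le (n - 1) ((m - 1) / n); omega⟩
      (if (m - 1) % n = n - 1 then ⊤ else (((m - 1) % n + 1 : ℕ) : ℕ∞)) := by
  rw [chainB, if_neg hm]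

lemma chainB_eq_sel (n : ℕ) (hn : 0 < n) (m : ℕ) :
    ∃ (k : Fin n) (t : ℕ∞), chainB n hn m = Sel n k t ∧
      (t ≤ ((n - 1 : ℕ) : ℕ∞) ∨ t = ⊤) := by
  by_cases hm : m = 0
  · subst hm
    exact ⟨_, _, chainB_zero_eq n hn, Or.inl zero_le⟩
  · refine ⟨_, _, chainB_pos_eq n hn m hm, ?_⟩
    by_cases hr : (m - 1) % n = n - 1
    · rw [if_pos hr]; exact Or.inr rfl
    · rw [if_neg hr]
      left
      have := Nat.mod_lt (m - 1) hn
      exact_mod_cast (by omega : (m - 1) % n + 1 ≤ n - 1)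

lemma sel_congr (n : ℕ) {v1 v2 : ℕ} (p1 : v1 < n) (p2 : v2 < n) (h : v1 = v2)
    {t1 t2 : ℕ∞} (h2 : t1 = t2) : Sel n ⟨v1, p1⟩ t1 = Sel n ⟨v2, p2⟩ t2 := by
  subst h; subst h2; rfl

lemma chain_step (n : ℕ) (hn : 0 < n) (m : ℕ) (hm : m < n * n) :
    ∃ (k : Fin n) (a b : ℕ∞), chainB n hn m = Sel n k a ∧ chainB n hn (m + 1) = Sel n k b ∧
      a < b ∧ ((∃ v : ℕ, a = (v : ℕ∞) ∧ b = ((v + 1 : ℕ) : ℕ∞)) ∨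
        (a = ((n - 1 : ℕ) : ℕ∞) ∧ b = ⊤)) := by
  by_cases hm0 : m = 0
  · subst hm0
    have hd : (1 - 1) / n = 0 := by simp
    have hd2 : (1 - 1) % n = 0 := by simp
    by_cases hn1 : n = 1
    · refine ⟨⟨n - 1, by omega⟩, 0, ⊤, chainB_zero_eq n hn, ?_, Ne.lt_top (by simp),
        Or.inr ⟨by simp [hn1], rfl⟩⟩
      refine (chainB_pos_eq n hn 1 one_ne_zero).trans
        (sel_congr n _ _ (by omega) (if_pos (by omega)))
    · refine ⟨⟨n - 1, by omega⟩, 0, ((0 + 1 : ℕ) : ℕ∞), chainB_zero_eq n hn, ?_, ?_,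
        Or.inl ⟨0, by simp, rfl⟩⟩
      · refine (chainB_pos_eq n hn 1 one_ne_zero).trans
          (sel_congr n _ _ (by omega) ?_)
        rw [if_neg (by omega), hd2]
      · exact lt_of_lt_of_le zero_lt_one (by norm_num)
  · have hn2 : 2 ≤ n := by
      rcases Nat.lt_or_ge n 2 with h | h
      · have h1 : n = 1 := by omega
        rw [h1] at hm
        omega
      · exact h
    obtain ⟨q, hq⟩ : ∃ q, (m - 1) / n = q := ⟨_, rfl⟩
    obtain ⟨r, hr⟩ : ∃ r, (m - 1) % n = r := ⟨_, rfl⟩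
    have hrn : r < n := hr ▸ Nat.mod_lt _ hn
    have hqr : n * q + r = m - 1 := by rw [← hq, ← hr]; exact Nat.div_add_mod (m - 1) n
    have e1 : n * (q + 1) = n * q + n := by ring
    have hqn : n - 1 - q < n := by omega
    have hpos : chainB n hn m =
        Sel n ⟨n - 1 - q, hqn⟩ (if r = n - 1 then ⊤ else ((r + 1 : ℕ) : ℕ∞)) := by
      rw [chainB_pos_eq n hn m hm0]
      exact sel_congr n _ _ (by rw [hq]) (by rw [hr])
    by_cases hcase : r = n - 1
    · -- block transition
      have hq2 : q + 1 < n := by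
        by_contra hcon
        push_neg at hcon
        have : n * n ≤ n * (q + 1) := Nat.mul_le_mul_left n hcon
        omega
      have hdm : m / n = q + 1 ∧ m % n = 0 :=
        (Nat.div_mod_unique hn).mpr (by omega)
      refine ⟨⟨n - 1 - (q + 1), by omega⟩, 0, ((0 + 1 : ℕ) : ℕ∞), ?_, ?_, ?_,
        Or.inl ⟨0, by simp, rfl⟩⟩
      · rw [hpos, if_pos hcase]
        exact sel_top_eq n _ _ (by simp only; omega)
      · refine (chainB_pos_eq n hn (m + 1) (by omega)).trans
          (sel_congr n _ _ ?_ ?_)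
        · rw [Nat.add_sub_cancel, hdm.1]
        · rw [Nat.add_sub_cancel, hdm.2, if_neg (by omega)]
      · exact lt_of_lt_of_le zero_lt_one (by norm_num)
    · -- same block
      have hdm : m / n = q ∧ m % n = r + 1 :=
        (Nat.div_mod_unique hn).mpr (by omega)
      by_cases hc2 : r + 1 = n - 1
      · refine ⟨⟨n - 1 - q, hqn⟩, ((r + 1 : ℕ) : ℕ∞), ⊤, ?_, ?_,
          Ne.lt_top (ENat.coe_ne_top _), Or.inr ⟨by rw [hc2], rfl⟩⟩
        · exact hpos.trans (sel_congr n _ _ rfl (if_neg hcase))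
        · refine (chainB_pos_eq n hn (m + 1) (by omega)).trans
            (sel_congr n _ _ ?_ ?_)
          · rw [Nat.add_sub_cancel, hdm.1]
          · rw [Nat.add_sub_cancel, hdm.2, if_pos hc2]
      · refine ⟨⟨n - 1 - q, hqn⟩, ((r + 1 : ℕ) : ℕ∞), ((r + 1 + 1 : ℕ) : ℕ∞), ?_, ?_,
          by exact_mod_cast Nat.lt_succ_self (r + 1), Or.inl ⟨r + 1, rfl, rfl⟩⟩
        · exact hpos.trans (sel_congr n _ _ rfl (if_neg hcase))
        · refine (chainB_pos_eq n hn (m + 1) (by omega)).trans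
            (sel_congr n _ _ ?_ ?_)
          · rw [Nat.add_sub_cancel, hdm.1]
          · rw [Nat.add_sub_cancel, hdm.2, if_neg hc2]

lemma chainB_top_eq (n : ℕ) (hn : 0 < n) (j : Fin n) : chainB n hn (n * n) j = ⊤ := by
  obtain ⟨p, rfl⟩ : ∃ p, n = p + 1 := ⟨n - 1, by omega⟩
  have h1 : (p + 1) * (p + 1) ≠ 0 := by positivity
  have hs : (p + 1) * (p + 1) = (p + 1) * p + (p + 1) := by ring
  have hd : ((p + 1) * (p + 1) - 1) / (p + 1) = p ∧ ((p + 1) * (p + 1) - 1) % (p + 1) = p :=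
    (Nat.div_mod_unique hn).mpr (by omega)
  rw [chainB_pos_eq _ hn _ h1]
  rcases Nat.eq_zero_or_pos (j : ℕ) with h | h
  · rw [show j = (⟨p + 1 - 1 - ((p + 1) * (p + 1) - 1) / (p + 1), by
        have := Nat.sub_le (p + 1 - 1) (((p + 1) * (p + 1) - 1) / (p + 1)); omega⟩ : Fin (p + 1))
      from Fin.ext (by simp only; omega), sel_self]
    rw [if_pos (by omega)]
  · rw [sel_gt _ _ (by rw [Fin.lt_def]; simp only; omega)]

/-- The type `B_n` Tamari lattice possesses an unrefinable (maximal) chain of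
left modular elements, namely `0̂ ⋖ S_{n,1} ⋖ ⋯ ⋖ S_{n,∞} ⋖ S_{n-1,1} ⋖ ⋯ ⋖ S_{1,∞} = 1̂`:
every member of the chain is a bracket vector and is left modular, the chain
starts at the bottom element and ends at the top element, and each step is a
covering relation. -/
theorem tamariB_leftModular_chain (n : ℕ) (hn : 0 < n) :
    (∀ m ≤ n * n, isBVec n (chainB n hn m) ∧ leftModB n (chainB n hn m)) ∧
    (∀ r : Fin n → ℕ∞, isBVec n r → chainB n hn 0 ≤ r ∧ r ≤ chainB n hn (n * n)) ∧
    (∀ m < n * n, chainB n hn m < chainB n hn (m + 1) ∧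
      ∀ c : Fin n → ℕ∞, isBVec n c →
        ¬(chainB n hn m < c ∧ c < chainB n hn (m + 1))) := by
  refine ⟨?_, ?_, ?_⟩
  · intro m _
    obtain ⟨k, t, heq, ht⟩ := chainB_eq_sel n hn m
    rw [heq]
    exact ⟨sel_isBVec n k t ht, sel_leftMod n k t ht⟩
  · intro r _
    constructor
    · intro j
      rw [chainB, if_pos rfl]
      exact zero_le
    · intro j
      rw [chainB_top_eq n hn j]
      exact le_top
  · intro m hm
    obtain ⟨k, a, b, hea, heb, hab, hgap⟩ := chain_step n hn m hm
    constructor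
    · rw [hea, heb]
      exact sel_lt_sel n k hab
    · intro c hc hcon
      rw [hea] at hcon
      rw [heb] at hcon
      obtain ⟨h1, h2⟩ := sel_between n k c hcon.1 hcon.2
      exact gap_elim n hc k hgap h1 h2
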